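/- Let T be a tree on n ≥ 2 vertices and S_n the star on n vertices. Then for every positive integer k, the vector C(2k;T) = (C_v(2k;T))_{v∈V(T)} of numbers of closed walks of length 2k starting at each vertex is weakly majorized by the corresponding vector C(2k;S_n) for the star; in particular, the total number of closed walks of length 2k in T is at most that in S_n. -/

import Mathlib

/-- The star on `n` vertices: vertex `0` is adjacent to all others. -/
def starGraph (n : ℕ) : SimpleGraph (Fin n) :=
  SimpleGraph.fromRel (fun i _ => (i : ℕ) = 0)

/-- Weak majorization of real vectors. -/
def WeaklyMajorizedBy {n : ℕ} (x y : Fin n → ℝ) : Prop :=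
  ∀ s : Finset (Fin n), ∃ t : Finset (Fin n), t.card = s.card ∧ ∑ i ∈ s, x i ≤ ∑ i ∈ t, y i

section Aux

open Finset SimpleGraph Matrix

variable {n : ℕ}




/-- A tree has no triangles. -/
lemma tree_no_triangle {V : Type*} {G : SimpleGraph V} (hG : G.IsAcyclic)
    {a b c : V} (hab : G.Adj a b) (hbc : G.Adj b c) (hca : G.Adj c a) : False := by
  have hp1 : (SimpleGraph.Walk.cons hab .nil).IsPath := by simp [hab.ne]
  have hp2 : (SimpleGraph.Walk.cons hca.symm (SimpleGraph.Walk.cons hbc.symm .nil)).IsPath := by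
    simp [hab.ne, hca.ne', hbc.ne']
  have := hG.path_unique ⟨_, hp1⟩ ⟨_, hp2⟩
  have h := congrArg (fun p : G.Path a b => p.1.length) this
  simp at h

/-- In a tree on `n` vertices, the degrees of the neighbours of a vertex sum to at most `n-1`. -/
lemma nbr_deg_sum {n : ℕ} {T : SimpleGraph (Fin n)} [DecidableRel T.Adj] (hT : T.IsTree) (u : Fin n) :
    ∑ v ∈ T.neighborFinset u, T.degree v ≤ n - 1 := by
  classical
  calc ∑ v ∈ T.neighborFinset u, T.degree v
      = ∑ v ∈ T.neighborFinset u, (T.incidenceFinset v).card := by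
        simp [T.card_incidenceFinset_eq_degree]
    _ = ((T.neighborFinset u).biUnion (fun v => T.incidenceFinset v)).card := by
        rw [Finset.card_biUnion]
        intro x hx y hy hxy
        simp only [Finset.disjoint_left]
        intro e hex hey
        rw [T.mem_incidenceFinset] at hex hey
        have := T.incidenceSet_inter_incidenceSet_subset hxy ⟨hex, hey⟩
        rw [Set.mem_singleton_iff] at this
        subst this
        have hadj : T.Adj x y := hex.1
        rw [Finset.mem_coe, mem_neighborFinset] at hx hy
        exact tree_no_triangle hT.IsAcyclic hx hadj hy.symm
    _ ≤ T.edgeFinset.card := by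
        apply Finset.card_le_card
        intro e he
        simp only [Finset.mem_biUnion] at he
        obtain ⟨v, -, hv⟩ := he
        rw [T.mem_incidenceFinset] at hv
        exact SimpleGraph.mem_edgeFinset.2 hv.1
    _ ≤ n - 1 := by
        have := hT.card_edgeFinset
        rw [Fintype.card_fin] at this; omega




lemma step_ineq {T : SimpleGraph (Fin n)} [DecidableRel T.Adj]
    (hdeg : ∀ u, ∑ v ∈ T.neighborFinset u, T.degree v ≤ n - 1) (x : Fin n → ℝ) :
    ∑ v, ((T.adjMatrix ℝ *ᵥ x) v) ^ 2 ≤ ((n - 1 : ℕ) : ℝ) * ∑ v, (x v) ^ 2 := by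
  have h1 : ∀ v, ((T.adjMatrix ℝ *ᵥ x) v) ^ 2
      ≤ (T.degree v : ℝ) * ∑ u ∈ T.neighborFinset v, (x u) ^ 2 := by
    intro v
    rw [adjMatrix_mulVec_apply, ← T.card_neighborFinset_eq_degree]
    exact_mod_cast sq_sum_le_card_mul_sum_sq (s := T.neighborFinset v) (f := x)
  calc ∑ v, ((T.adjMatrix ℝ *ᵥ x) v) ^ 2
      ≤ ∑ v, (T.degree v : ℝ) * ∑ u ∈ T.neighborFinset v, (x u) ^ 2 :=
        Finset.sum_le_sum fun v _ => h1 v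
    _ = ∑ v, ∑ u, (if T.Adj v u then (T.degree v : ℝ) * (x u) ^ 2 else 0) := by
        refine Finset.sum_congr rfl fun v _ => ?_
        rw [Finset.mul_sum]
        rw [show T.neighborFinset v = Finset.univ.filter (T.Adj v) from by
          ext u; simp [mem_neighborFinset]]
        rw [Finset.sum_filter]
    _ = ∑ u, ∑ v, (if T.Adj v u then (T.degree v : ℝ) * (x u) ^ 2 else 0) := Finset.sum_comm
    _ = ∑ u, (x u) ^ 2 * ∑ v ∈ T.neighborFinset u, (T.degree v : ℝ) := by
        refine Finset.sum_congr rfl fun u _ => ?_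
        rw [Finset.mul_sum]
        rw [show T.neighborFinset u = Finset.univ.filter (fun v => T.Adj v u) from by
          ext w; simp [mem_neighborFinset, adj_comm]]
        rw [Finset.sum_filter]
        refine Finset.sum_congr rfl fun v _ => ?_
        split <;> ring
    _ ≤ ∑ u, (x u) ^ 2 * ((n - 1 : ℕ) : ℝ) := by
        refine Finset.sum_le_sum fun u _ => ?_
        refine mul_le_mul_of_nonneg_left ?_ (sq_nonneg _)
        exact_mod_cast Nat.cast_le.2 (hdeg u)
    _ = ((n - 1 : ℕ) : ℝ) * ∑ v, (x v) ^ 2 := by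
        rw [Finset.mul_sum]; exact Finset.sum_congr rfl fun v _ => mul_comm _ _

lemma col_sq_sum {T : SimpleGraph (Fin n)} [DecidableRel T.Adj]
    (hdeg : ∀ u, ∑ v ∈ T.neighborFinset u, T.degree v ≤ n - 1) (v : Fin n) :
    ∀ k : ℕ, ∑ u, ((T.adjMatrix ℝ ^ (k + 1)) u v) ^ 2
      ≤ ((n - 1 : ℕ) : ℝ) ^ k * T.degree v := by
  intro k
  induction k with
  | zero =>
      simp only [zero_add, pow_one, pow_zero, one_mul]
      have : ∀ u, ((T.adjMatrix ℝ) u v) ^ 2 = (T.adjMatrix ℝ) u v := by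
        intro u; by_cases h : T.Adj u v <;> simp [adjMatrix_apply, h]
      rw [Finset.sum_congr rfl fun u _ => this u]
      have : ∑ u, (T.adjMatrix ℝ) u v = T.degree v := by
        have := congrFun (T.transpose_adjMatrix (α := ℝ)) v
        calc ∑ u, (T.adjMatrix ℝ) u v = ∑ u, (T.adjMatrix ℝ) v u := by
              refine Finset.sum_congr rfl fun u _ => ?_
              by_cases h : T.Adj u v <;> simp [adjMatrix_apply, h, adj_comm]
          _ = T.degree v := by
              have := T.adjMatrix_mulVec_const_apply (α := ℝ) (a := 1) (v := v)
              simpa [mulVec, dotProduct] using this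
      rw [this]
  | succ k ih =>
      have key : ∀ u, (T.adjMatrix ℝ ^ (k + 2)) u v
          = (T.adjMatrix ℝ *ᵥ (fun w => (T.adjMatrix ℝ ^ (k + 1)) w v)) u := by
        intro u
        rw [pow_succ']
        simp [Matrix.mul_apply, mulVec, dotProduct]
      rw [Finset.sum_congr rfl fun u _ => by rw [key u]]
      calc ∑ u, ((T.adjMatrix ℝ *ᵥ fun w => (T.adjMatrix ℝ ^ (k + 1)) w v) u) ^ 2
          ≤ ((n - 1 : ℕ) : ℝ) * ∑ u, ((T.adjMatrix ℝ ^ (k + 1)) u v) ^ 2 :=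
            step_ineq hdeg _
        _ ≤ ((n - 1 : ℕ) : ℝ) * (((n - 1 : ℕ) : ℝ) ^ k * T.degree v) := by
            exact mul_le_mul_of_nonneg_left ih (by positivity)
        _ = ((n - 1 : ℕ) : ℝ) ^ (k + 1) * T.degree v := by ring

lemma tree_diag_bound {T : SimpleGraph (Fin n)} [DecidableRel T.Adj]
    (hdeg : ∀ u, ∑ v ∈ T.neighborFinset u, T.degree v ≤ n - 1)
    (k : ℕ) (hk : 0 < k) (v : Fin n) :
    (T.adjMatrix ℝ ^ (2 * k)) v v ≤ ((n - 1 : ℕ) : ℝ) ^ (k - 1) * T.degree v := by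
  have hsym : (T.adjMatrix ℝ ^ k)ᵀ = T.adjMatrix ℝ ^ k := by
    rw [Matrix.transpose_pow, T.transpose_adjMatrix]
  have hdiag : (T.adjMatrix ℝ ^ (2 * k)) v v = ∑ u, ((T.adjMatrix ℝ ^ k) u v) ^ 2 := by
    rw [two_mul, pow_add, Matrix.mul_apply]
    refine Finset.sum_congr rfl fun u _ => ?_
    have h2 : (T.adjMatrix ℝ ^ k) v u = (T.adjMatrix ℝ ^ k) u v :=
      (Matrix.transpose_apply _ _ _).symm.trans (by rw [hsym])
    rw [h2]; ring
  rw [hdiag]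
  obtain ⟨k', rfl⟩ : ∃ k', k = k' + 1 := ⟨k - 1, by omega⟩
  simpa using col_sq_sum hdeg v k'





instance starDec : DecidableRel (_root_.starGraph n).Adj := fun a b =>
  decidable_of_iff (a ≠ b ∧ ((a : ℕ) = 0 ∨ (b : ℕ) = 0)) (by
    rw [_root_.starGraph, SimpleGraph.fromRel_adj])

lemma starGraph_adj [NeZero n] (a b : Fin n) :
    (_root_.starGraph n).Adj a b ↔ a ≠ b ∧ (a = 0 ∨ b = 0) := by
  rw [_root_.starGraph, SimpleGraph.fromRel_adj]
  have h0 : ((0 : Fin n) : ℕ) = 0 := Fin.val_zero n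
  constructor
  · rintro ⟨h, h' | h'⟩
    · exact ⟨h, Or.inl (Fin.ext (h'.trans h0.symm))⟩
    · exact ⟨h, Or.inr (Fin.ext (h'.trans h0.symm))⟩
  · rintro ⟨h, rfl | rfl⟩
    · exact ⟨h, Or.inl h0⟩
    · exact ⟨h, Or.inr h0⟩

lemma star_entry [NeZero n] (a b : Fin n) :
    (_root_.starGraph n).adjMatrix ℝ a b = if a ≠ b ∧ (a = 0 ∨ b = 0) then 1 else 0 := by
  rw [adjMatrix_apply]
  by_cases h : (_root_.starGraph n).Adj a b
  · rw [if_pos h, if_pos ((starGraph_adj a b).1 h)]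
  · rw [if_neg h, if_neg (fun hc => h ((starGraph_adj a b).2 hc))]

/-- Block diagonal form of powers of star adjacency matrix squared. -/
def Dmat (n : ℕ) [NeZero n] (c d : ℝ) : Matrix (Fin n) (Fin n) ℝ :=
  Matrix.of fun i j => if i = 0 then (if j = 0 then c else 0) else (if j = 0 then 0 else d)

lemma card_ne_zero' [NeZero n] :
    (Finset.univ.filter (fun l : Fin n => ¬ l = 0)).card = n - 1 := by
  rw [Finset.filter_not, Finset.card_sdiff_of_subset (Finset.filter_subset _ _)]
  simp [Finset.filter_eq']

lemma star_sq [NeZero n] :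
    (_root_.starGraph n).adjMatrix ℝ ^ 2 = Dmat n ((n - 1 : ℕ) : ℝ) 1 := by
  ext i j
  rw [pow_two, Matrix.mul_apply]
  by_cases hi : i = 0 <;> by_cases hj : j = 0 <;>
    simp only [Dmat, Matrix.of_apply, hi, hj, if_pos, if_neg, if_true, if_false]
  · subst hi; subst hj
    have key : ∀ l : Fin n, (_root_.starGraph n).adjMatrix ℝ 0 l * (_root_.starGraph n).adjMatrix ℝ l 0
        = if l = 0 then 0 else 1 := by
      intro l
      rw [star_entry, star_entry]
      by_cases hl : l = 0 <;> simp [hl, eq_comm]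
    rw [Finset.sum_congr rfl fun l _ => key l, Finset.sum_ite, Finset.sum_const,
      Finset.sum_const, card_ne_zero']
    simp
  · subst hi
    have key : ∀ l : Fin n, (_root_.starGraph n).adjMatrix ℝ 0 l * (_root_.starGraph n).adjMatrix ℝ l j = 0 := by
      intro l
      rw [star_entry, star_entry]
      by_cases hl : l = 0 <;> simp [hl, hj, eq_comm]
    rw [Finset.sum_congr rfl fun l _ => key l]
    simp
  · subst hj
    have key : ∀ l : Fin n, (_root_.starGraph n).adjMatrix ℝ i l * (_root_.starGraph n).adjMatrix ℝ l 0 = 0 := by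
      intro l
      rw [star_entry, star_entry]
      by_cases hl : l = 0 <;> simp [hl, hi, eq_comm]
    rw [Finset.sum_congr rfl fun l _ => key l]
    simp
  · have key : ∀ l : Fin n, (_root_.starGraph n).adjMatrix ℝ i l * (_root_.starGraph n).adjMatrix ℝ l j
        = if l = 0 then 1 else 0 := by
      intro l
      rw [star_entry, star_entry]
      by_cases hl : l = 0 <;> simp [hl, hi, hj, eq_comm]
    rw [Finset.sum_congr rfl fun l _ => key l, Finset.sum_ite_eq' Finset.univ (0 : Fin n)]
    simp

lemma Dmat_mul [NeZero n] (c d c' d' : ℝ) :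
    Dmat n c d * Dmat n c' d' = Dmat n (c * c') (((n - 1 : ℕ) : ℝ) * (d * d')) := by
  ext i j
  rw [Matrix.mul_apply]
  have key : ∀ l : Fin n, (Dmat n c d) i l * (Dmat n c' d') l j
      = if i = 0 then (if j = 0 then (if l = 0 then c * c' else 0) else 0)
        else (if j = 0 then 0 else (if l = 0 then 0 else d * d')) := by
    intro l
    by_cases hi : i = 0 <;> by_cases hj : j = 0 <;> by_cases hl : l = 0 <;>
      simp [Dmat, hi, hj, hl]
  rw [Finset.sum_congr rfl fun l _ => key l]
  by_cases hi : i = 0 <;> by_cases hj : j = 0 <;>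
    simp only [hi, hj, if_true, if_false, ite_true, ite_false]
  · rw [Finset.sum_ite_eq' Finset.univ (0 : Fin n)]
    simp [Dmat]
  · simp [Dmat, hj]
  · simp [Dmat, hi]
  · rw [Finset.sum_ite, Finset.sum_const, Finset.sum_const, card_ne_zero']
    simp [Dmat, hi, hj, mul_comm]

lemma starAdj_pow [NeZero n] (k : ℕ) :
    (_root_.starGraph n).adjMatrix ℝ ^ (2 * (k + 1))
      = Dmat n (((n - 1 : ℕ) : ℝ) ^ (k + 1)) (((n - 1 : ℕ) : ℝ) ^ k) := by
  induction k with
  | zero => simpa using star_sq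
  | succ k ih =>
      have h2 : 2 * (k + 2) = 2 + 2 * (k + 1) := by ring
      rw [h2, pow_add, star_sq, ih, Dmat_mul]
      ring_nf

lemma star_diag [NeZero n] (k : ℕ) (hk : 0 < k) (v : Fin n) :
    ((_root_.starGraph n).adjMatrix ℝ ^ (2 * k)) v v
      = if v = 0 then ((n - 1 : ℕ) : ℝ) ^ k else ((n - 1 : ℕ) : ℝ) ^ (k - 1) := by
  obtain ⟨k', rfl⟩ : ∃ k', k = k' + 1 := ⟨k - 1, by omega⟩
  rw [starAdj_pow]
  by_cases hv : v = 0 <;> simp [Dmat, hv]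




/-- In a tree, the number of edges entirely inside a set `s` is less than `#s`. -/
lemma inside_edges_lt {T : SimpleGraph (Fin n)} [DecidableRel T.Adj] (hT : T.IsTree)
    {s : Finset (Fin n)} {r : Fin n} (hr : r ∈ s) :
    (T.edgeFinset.filter (fun e => ∀ v ∈ e, v ∈ s)).card ≤ s.card - 1 := by
  classical
  haveI : Inhabited (Fin n) := ⟨r⟩
  choose f hf using fun w => (hT.existsUnique_path w r).exists
  have huniq : ∀ (w : Fin n) (q : T.Walk w r), q.IsPath → q = f w := fun w q hq =>
    (hT.existsUnique_path w r).unique hq (hf w)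
  set g : Fin n → Sym2 (Fin n) := fun w => if w = r then s(r, r) else (f w).edges.headI with hg
  have adj_path : ∀ (a b : Fin n) (h : T.Adj a b) (p : T.Walk a b), p.IsPath →
      p = SimpleGraph.Walk.cons h .nil := by
    intro a b h p hp
    have := hT.IsAcyclic.path_unique ⟨p, hp⟩ ⟨SimpleGraph.Walk.cons h .nil, by simp [h.ne]⟩
    exact congrArg Subtype.val this
  have exists_g : ∀ a b : Fin n, T.Adj a b → ∃ w, w ≠ r ∧ (w = a ∨ w = b) ∧ g w = s(a, b) := by
    intro a b hab
    by_cases har : a = r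
    · subst har
      refine ⟨b, hab.ne', Or.inr rfl, ?_⟩
      have hfb : f b = SimpleGraph.Walk.cons hab.symm .nil :=
        adj_path b a hab.symm (f b) (hf b)
      rw [hg]
      simp only [if_neg hab.ne']
      rw [hfb]
      simp [SimpleGraph.Walk.edges_cons, Sym2.eq_swap]
    · by_cases hbr : b = r
      · subst hbr
        refine ⟨a, har, Or.inl rfl, ?_⟩
        have hfa : f a = SimpleGraph.Walk.cons hab .nil :=
          adj_path a b hab (f a) (hf a)
        rw [hg]
        simp only [if_neg har]
        rw [hfa]
        simp [SimpleGraph.Walk.edges_cons]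
      · by_cases hbs : b ∈ (f a).support
        · refine ⟨a, har, Or.inl rfl, ?_⟩
          have htake : (f a).takeUntil b hbs = SimpleGraph.Walk.cons hab .nil :=
            adj_path a b hab _ ((hf a).takeUntil hbs)
          have hfa : f a = SimpleGraph.Walk.cons hab ((f a).dropUntil b hbs) := by
            conv_lhs => rw [← SimpleGraph.Walk.take_spec (f a) hbs]
            rw [htake]
            rfl
          rw [hg]
          simp only [har, if_false, if_neg har]
          rw [hfa]
          simp [SimpleGraph.Walk.edges_cons]
        · refine ⟨b, hbr, Or.inr rfl, ?_⟩
          have hw : (SimpleGraph.Walk.cons hab.symm (f a)).IsPath := by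
            rw [SimpleGraph.Walk.cons_isPath_iff]
            exact ⟨hf a, hbs⟩
          have hfb : f b = SimpleGraph.Walk.cons hab.symm (f a) := (huniq b _ hw).symm
          rw [hg]
          simp only [if_neg hbr]
          rw [hfb]
          simp [SimpleGraph.Walk.edges_cons, Sym2.eq_swap]
  calc (T.edgeFinset.filter (fun e => ∀ v ∈ e, v ∈ s)).card
      ≤ ((s.erase r).image g).card := by
        apply Finset.card_le_card
        intro e he
        rw [Finset.mem_filter] at he
        obtain ⟨heE, hes⟩ := he
        induction e using Sym2.ind with
        | _ a b =>
          have hab : T.Adj a b := SimpleGraph.mem_edgeFinset.1 heE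
          obtain ⟨w, hwr, hwab, hgw⟩ := exists_g a b hab
          refine Finset.mem_image.2 ⟨w, ?_, hgw⟩
          refine Finset.mem_erase.2 ⟨hwr, ?_⟩
          rcases hwab with rfl | rfl
          · exact hes _ (Sym2.mem_mk_left w b)
          · exact hes _ (Sym2.mem_mk_right a w)
    _ ≤ (s.erase r).card := Finset.card_image_le
    _ = s.card - 1 := Finset.card_erase_of_mem hr

/-- In a tree on `n` vertices, the degrees over any nonempty subset `s` sum to at most
`(n-1) + (#s - 1)`. -/
lemma subset_deg_sum {T : SimpleGraph (Fin n)} [DecidableRel T.Adj] (hT : T.IsTree)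
    {s : Finset (Fin n)} (hs : s.Nonempty) :
    ∑ v ∈ s, T.degree v ≤ (n - 1) + (s.card - 1) := by
  classical
  obtain ⟨r, hr⟩ := hs
  have step1 : ∑ v ∈ s, T.degree v = ∑ e ∈ T.edgeFinset, (s.filter (fun v => v ∈ e)).card := by
    calc ∑ v ∈ s, T.degree v
        = ∑ v ∈ s, (T.incidenceFinset v).card := by
          simp [T.card_incidenceFinset_eq_degree]
      _ = ∑ v ∈ s, (T.edgeFinset.filter (fun e => v ∈ e)).card := by
          refine Finset.sum_congr rfl fun v _ => ?_
          congr 1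
          ext e
          simp [SimpleGraph.mem_incidenceFinset, SimpleGraph.incidenceSet,
            SimpleGraph.mem_edgeFinset]
      _ = ∑ v ∈ s, ∑ e ∈ T.edgeFinset, (if v ∈ e then 1 else 0) :=
          Finset.sum_congr rfl fun v _ => Finset.card_filter _ _
      _ = ∑ e ∈ T.edgeFinset, ∑ v ∈ s, (if v ∈ e then 1 else 0) := Finset.sum_comm
      _ = ∑ e ∈ T.edgeFinset, (s.filter (fun v => v ∈ e)).card :=
          Finset.sum_congr rfl fun e _ => (Finset.card_filter _ _).symm
  have step2 : ∀ e ∈ T.edgeFinset,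
      (s.filter (fun v => v ∈ e)).card ≤ 1 + (if (∀ v ∈ e, v ∈ s) then 1 else 0) := by
    intro e he
    induction e using Sym2.ind with
    | _ a b =>
      by_cases hall : ∀ v ∈ (s(a, b) : Sym2 (Fin n)), v ∈ s
      · rw [if_pos hall]
        have hsub : s.filter (fun v => v ∈ (s(a, b) : Sym2 (Fin n))) ⊆ {a, b} := by
          intro v hv
          rw [Finset.mem_filter] at hv
          rcases Sym2.mem_iff.1 hv.2 with rfl | rfl <;> simp
        calc _ ≤ ({a, b} : Finset (Fin n)).card := Finset.card_le_card hsub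
          _ ≤ 2 := Finset.card_insert_le _ _ |>.trans (by simp)
      · rw [if_neg hall]
        push_neg at hall
        obtain ⟨w, hw, hws⟩ := hall
        rcases Sym2.mem_iff.1 hw with rfl | rfl
        · have hsub : s.filter (fun v => v ∈ (s(w, b) : Sym2 (Fin n))) ⊆ {b} := by
            intro v hv
            rw [Finset.mem_filter] at hv
            rcases Sym2.mem_iff.1 hv.2 with rfl | rfl
            · exact absurd hv.1 hws
            · simp
          simpa using Finset.card_le_card hsub
        · have hsub : s.filter (fun v => v ∈ (s(a, w) : Sym2 (Fin n))) ⊆ {a} := by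
            intro v hv
            rw [Finset.mem_filter] at hv
            rcases Sym2.mem_iff.1 hv.2 with rfl | rfl
            · simp
            · exact absurd hv.1 hws
          simpa using Finset.card_le_card hsub
  calc ∑ v ∈ s, T.degree v
      ≤ ∑ e ∈ T.edgeFinset, (1 + if (∀ v ∈ e, v ∈ s) then 1 else 0) := by
        rw [step1]; exact Finset.sum_le_sum step2
    _ = T.edgeFinset.card + (T.edgeFinset.filter (fun e => ∀ v ∈ e, v ∈ s)).card := by
        rw [Finset.sum_add_distrib, Finset.sum_const, smul_eq_mul, mul_one, Finset.sum_ite,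
          Finset.sum_const, Finset.sum_const]
        simp
    _ ≤ (n - 1) + (s.card - 1) := by
        have h1 : T.edgeFinset.card = n - 1 := by
          have := hT.card_edgeFinset
          rw [Fintype.card_fin] at this
          omega
        have h2 := inside_edges_lt hT hr
        omega



lemma walk_count_eq {G : SimpleGraph (Fin n)} [DecidableRel G.Adj] (v : Fin n) (m : ℕ) :
    ((Nat.card {p : G.Walk v v // p.length = m} : ℕ) : ℝ) = (G.adjMatrix ℝ ^ m) v v := by
  rw [SimpleGraph.adjMatrix_pow_apply_eq_card_walk, Nat.card_eq_fintype_card]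
  norm_cast

end Aux

open Finset Matrix in
/-- For any tree `T` on `n ≥ 2` vertices, the vector of numbers of closed walks of length `2k`
starting at each vertex is weakly majorized by the corresponding vector for the star `S_n`;
in particular the total number of closed walks of length `2k` in `T` is at most that in `S_n`. -/
theorem stmt_5 {n : ℕ} (hn : 2 ≤ n) (T : SimpleGraph (Fin n)) (hT : T.IsTree)
    (k : ℕ) (hk : 0 < k) :
    WeaklyMajorizedBy
        (fun v => (Nat.card {p : T.Walk v v // p.length = 2 * k} : ℝ))
        (fun v => (Nat.card {p : (starGraph n).Walk v v // p.length = 2 * k} : ℝ)) ∧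
      ∑ v : Fin n, Nat.card {p : T.Walk v v // p.length = 2 * k}
        ≤ ∑ v : Fin n, Nat.card {p : (starGraph n).Walk v v // p.length = 2 * k} := by
  classical
  haveI : NeZero n := ⟨by omega⟩
  letI instT : DecidableRel T.Adj := Classical.decRel _
  set K : ℝ := ((n - 1 : ℕ) : ℝ) with hK
  have hdeg : ∀ u, ∑ v ∈ T.neighborFinset u, T.degree v ≤ n - 1 := fun u => nbr_deg_sum hT u
  have hxval : ∀ v : Fin n, (Nat.card {p : T.Walk v v // p.length = 2 * k} : ℝ)
      = (T.adjMatrix ℝ ^ (2 * k)) v v := fun v => walk_count_eq v (2 * k)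
  have hyval : ∀ v : Fin n, (Nat.card {p : (starGraph n).Walk v v // p.length = 2 * k} : ℝ)
      = if v = 0 then K ^ k else K ^ (k - 1) := by
    intro v
    rw [walk_count_eq v (2 * k), star_diag k hk v]
  have hxbound : ∀ v : Fin n, (Nat.card {p : T.Walk v v // p.length = 2 * k} : ℝ)
      ≤ K ^ (k - 1) * T.degree v := by
    intro v
    rw [hxval v]
    exact tree_diag_bound hdeg k hk v
  have hKpow : K ^ (k - 1) * K = K ^ k := by
    rw [← pow_succ]
    congr 1
    omega
  have hmaj : WeaklyMajorizedBy
      (fun v => (Nat.card {p : T.Walk v v // p.length = 2 * k} : ℝ))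
      (fun v => (Nat.card {p : (starGraph n).Walk v v // p.length = 2 * k} : ℝ)) := by
    intro s
    rcases s.eq_empty_or_nonempty with rfl | hs
    · exact ⟨∅, rfl, le_refl 0⟩
    · -- choose t = insert 0 u with u ⊆ univ.erase 0, #u = #s - 1
      have hcards : s.card - 1 ≤ (Finset.univ.erase (0 : Fin n)).card := by
        rw [Finset.card_erase_of_mem (Finset.mem_univ _), Finset.card_univ, Fintype.card_fin]
        have := Finset.card_le_card (Finset.subset_univ s)
        rw [Finset.card_univ, Fintype.card_fin] at this
        omega
      obtain ⟨u, hu, hucard⟩ := Finset.exists_subset_card_eq hcards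
      have h0u : (0 : Fin n) ∉ u := fun h => (Finset.mem_erase.1 (hu h)).1 rfl
      refine ⟨insert 0 u, ?_, ?_⟩
      · rw [Finset.card_insert_of_notMem h0u, hucard]
        have := hs.card_pos
        omega
      · have hrhs : ∑ i ∈ insert 0 u,
            (Nat.card {p : (starGraph n).Walk i i // p.length = 2 * k} : ℝ)
            = K ^ k + (s.card - 1 : ℕ) * K ^ (k - 1) := by
          rw [Finset.sum_insert h0u]
          congr 1
          · rw [hyval 0, if_pos rfl]
          · rw [Finset.sum_congr rfl fun i hi => by
              rw [hyval i, if_neg (fun h => h0u (by rw [← h]; exact hi))]]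
            rw [Finset.sum_const, hucard, nsmul_eq_mul]
        rw [hrhs]
        calc ∑ i ∈ s, (Nat.card {p : T.Walk i i // p.length = 2 * k} : ℝ)
            ≤ ∑ i ∈ s, K ^ (k - 1) * T.degree i :=
              Finset.sum_le_sum fun i _ => hxbound i
          _ = K ^ (k - 1) * ((∑ i ∈ s, T.degree i : ℕ) : ℝ) := by
              rw [Nat.cast_sum, Finset.mul_sum]
          _ ≤ K ^ (k - 1) * (((n - 1) + (s.card - 1) : ℕ) : ℝ) := by
              refine mul_le_mul_of_nonneg_left ?_ (by positivity)
              exact_mod_cast Nat.cast_le.2 (subset_deg_sum hT hs)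
          _ = K ^ k + (s.card - 1 : ℕ) * K ^ (k - 1) := by
              push_cast
              rw [← hKpow]
              ring
  refine ⟨hmaj, ?_⟩
  obtain ⟨t, htcard, hle⟩ := hmaj Finset.univ
  have ht : t = Finset.univ := Finset.eq_univ_of_card t (by
    rw [htcard, Finset.card_univ])
  rw [ht] at hle
  have := hle
  rw [← Nat.cast_le (α := ℝ)]
  push_cast
  exact this
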